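/- arXiv:2011.14071 — 2 statements merged into one kernel-verified Lean document; each statement's English description precedes it below -/
import Mathlib

section
/- Let G be a finite F-group with [G : Z(G)] = p^k (p prime), and suppose |Cent(G)| = (p^k − 1)/(p − 1) + 1. Then [Z(C(x)) : Z(G)] = p for every non-central x ∈ G. -/
/-- The set of element centralizers of `G`. -/
def cent (G : Type*) [Group G] : Set (Subgroup G) :=
  Set.range fun x : G => Subgroup.centralizer {x}

/-- The number of distinct element centralizers of `G`. -/
noncomputable def numCent (G : Type*) [Group G] : ℕ := (cent G).ncard

/-- The center of the centralizer `C(x)`, viewed as a subgroup of `G`. -/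
def centerCentralizer {G : Type*} [Group G] (x : G) : Subgroup G :=
  Subgroup.centralizer {x} ⊓
    Subgroup.centralizer ((Subgroup.centralizer {x} : Subgroup G) : Set G)

/-- `G` is an F-group: for non-central `x, y`, `C(x) ≤ C(y)` implies `C(x) = C(y)`. -/
def IsFGroup (G : Type*) [Group G] : Prop :=
  ∀ x y : G, x ∉ Subgroup.center G → y ∉ Subgroup.center G →
    Subgroup.centralizer {x} ≤ Subgroup.centralizer {y} →
    Subgroup.centralizer ({x} : Set G) = Subgroup.centralizer {y}

/-- The set of conjugates of a subgroup `H` of `G`. -/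
def conjugates {G : Type*} [Group G] (H : Subgroup G) : Set (Subgroup G) :=
  {K | ∃ g : G, K = Subgroup.map (MulAut.conj g).toMonoidHom H}

/-- The number of `z`-classes of `G`: elements are `z`-equivalent when their
centralizers are conjugate in `G`, so the number of `z`-classes is the number of
distinct conjugacy classes of element centralizers. -/
noncomputable def numZClasses (G : Type*) [Group G] : ℕ :=
  (Set.range fun x : G => conjugates (Subgroup.centralizer {x})).ncard

section Aux

variable {G : Type*} [Group G]

lemma mem_centerCentralizer_self (x : G) : x ∈ centerCentralizer x := by
  refine Subgroup.mem_inf.2 ⟨Subgroup.mem_centralizer_singleton_iff.2 rfl, ?_⟩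
  rw [Subgroup.mem_centralizer_iff]
  intro h hh
  exact Subgroup.mem_centralizer_singleton_iff.1 hh

lemma center_le_centerCentralizer (x : G) :
    Subgroup.center G ≤ centerCentralizer x :=
  le_inf (Subgroup.center_le_centralizer _) (Subgroup.center_le_centralizer _)

lemma centralizer_le_of_mem_centerCentralizer {x g : G} (hg : g ∈ centerCentralizer x) :
    Subgroup.centralizer ({x} : Set G) ≤ Subgroup.centralizer {g} := by
  intro h hh
  rw [Subgroup.mem_centralizer_singleton_iff]
  exact (Subgroup.mem_centralizer_iff.1 hg.2) h hh

lemma centralizer_eq_of_mem {x g : G} (hF : IsFGroup G)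
    (hx : x ∉ Subgroup.center G) (hg : g ∉ Subgroup.center G)
    (hmem : g ∈ centerCentralizer x) :
    Subgroup.centralizer ({x} : Set G) = Subgroup.centralizer {g} :=
  hF x g hx hg (centralizer_le_of_mem_centerCentralizer hmem)

lemma centerCentralizer_eq_of_mem {x y g : G} (hF : IsFGroup G)
    (hx : x ∉ Subgroup.center G) (hy : y ∉ Subgroup.center G)
    (hg : g ∉ Subgroup.center G)
    (h1 : g ∈ centerCentralizer x) (h2 : g ∈ centerCentralizer y) :
    centerCentralizer x = centerCentralizer y := by
  unfold centerCentralizer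
  rw [centralizer_eq_of_mem hF hx hg h1, centralizer_eq_of_mem hF hy hg h2]

end Aux

theorem stmt7 (G : Type*) [Group G] [Finite G] (hF : IsFGroup G)
    (p k : ℕ) (hp : p.Prime) (hk : (Subgroup.center G).index = p ^ k)
    (hc : numCent G = (p ^ k - 1) / (p - 1) + 1) :
    ∀ x : G, x ∉ Subgroup.center G →
      (Subgroup.center G).relIndex (centerCentralizer x) = p := by
  classical
  have _ : Fintype G := Fintype.ofFinite G
  intro x hx
  have hp1 : 1 < p := hp.one_lt
  have hk0 : k ≠ 0 := by
    rintro rfl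
    rw [pow_zero, Subgroup.index_eq_one] at hk
    exact hx (hk ▸ Subgroup.mem_top x)
  set Z := Subgroup.center G with hZdef
  set c := Nat.card Z with hcdef
  have hc0 : 0 < c := Nat.card_pos
  -- the set of "partition" subgroups
  set 𝒮 : Set (Subgroup G) := (fun a => centerCentralizer a) '' {a : G | a ∉ Z} with h𝒮
  have h𝒮fin : 𝒮.Finite := Set.toFinite _
  set T : Finset (Subgroup G) := h𝒮fin.toFinset with hT
  have hmemT : ∀ H, H ∈ T ↔ ∃ a : G, a ∉ Z ∧ centerCentralizer a = H := by
    intro H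
    rw [hT, Set.Finite.mem_toFinset, h𝒮]
    constructor
    · rintro ⟨a, ha, rfl⟩; exact ⟨a, ha, rfl⟩
    · rintro ⟨a, ha, rfl⟩; exact ⟨a, ha, rfl⟩
  -- facts about members of T
  have hZle : ∀ H ∈ T, Z ≤ H := by
    intro H hH
    obtain ⟨a, _, rfl⟩ := (hmemT H).1 hH
    exact center_le_centerCentralizer a
  have hrel : ∀ H ∈ T, Nat.card H = Subgroup.relIndex Z H * c := by
    intro H hH
    have h1 : (Z.subgroupOf H).index * Nat.card (Z.subgroupOf H) = Nat.card H :=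
      Subgroup.index_mul_card _
    have h2 : Nat.card (Z.subgroupOf H) = c :=
      Nat.card_congr (Subgroup.subgroupOfEquivOfLe (hZle H hH)).toEquiv
    rw [Subgroup.relIndex, ← h1, h2]
  have hple : ∀ H ∈ T, p ≤ Subgroup.relIndex Z H := by
    intro H hH
    have hdvd : Subgroup.relIndex Z H ∣ p ^ k :=
      ⟨H.index, by rw [← hk, Subgroup.relIndex_mul_index (hZle H hH)]⟩
    obtain ⟨j, hjk, hj⟩ := (Nat.dvd_prime_pow hp).1 hdvd
    have hj0 : j ≠ 0 := by
      rintro rfl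
      rw [pow_zero] at hj
      have := Subgroup.relIndex_eq_one.1 hj
      obtain ⟨a, ha, rfl⟩ := (hmemT H).1 hH
      exact ha (this (mem_centerCentralizer_self a))
    calc p = p ^ 1 := (pow_one p).symm
    _ ≤ p ^ j := Nat.pow_le_pow_right hp.pos (Nat.one_le_iff_ne_zero.2 hj0)
    _ = Subgroup.relIndex Z H := hj.symm
  -- the partition
  set D : Subgroup G → Finset G := fun H => Set.toFinset ((H : Set G) \ (Z : Set G)) with hD
  have hmemD : ∀ H g, g ∈ D H ↔ g ∈ H ∧ g ∉ Z := by
    intro H g; rw [hD]; simp [Set.mem_toFinset]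
  have hdisj : ∀ H₁ ∈ T, ∀ H₂ ∈ T, H₁ ≠ H₂ → Disjoint (D H₁) (D H₂) := by
    intro H₁ h₁ H₂ h₂ hne
    rw [Finset.disjoint_left]
    intro g hg1 hg2
    obtain ⟨a, ha, rfl⟩ := (hmemT H₁).1 h₁
    obtain ⟨b, hb, rfl⟩ := (hmemT H₂).1 h₂
    rw [hmemD] at hg1 hg2
    exact hne (centerCentralizer_eq_of_mem hF ha hb hg1.2 hg1.1 hg2.1)
  have hcover : T.biUnion D = Set.toFinset (Set.univ \ (Z : Set G)) := by
    ext g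
    simp only [Finset.mem_biUnion, Set.mem_toFinset, Set.mem_diff, Set.mem_univ, true_and]
    constructor
    · rintro ⟨H, hH, hg⟩
      exact ((hmemD H g).1 hg).2
    · intro hg
      refine ⟨centerCentralizer g, (hmemT _).2 ⟨g, hg, rfl⟩, (hmemD _ g).2
        ⟨mem_centerCentralizer_self g, hg⟩⟩
  -- cardinalities
  have hcardD : ∀ H ∈ T, (D H).card = Subgroup.relIndex Z H * c - c := by
    intro H hH
    rw [hD]
    have hsub : (Z : Set G) ⊆ (H : Set G) := hZle H hH
    rw [← Set.ncard_eq_toFinset_card', Set.ncard_diff hsub, ← Nat.card_coe_set_eq,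
      ← Nat.card_coe_set_eq]
    rw [SetLike.coe_sort_coe, SetLike.coe_sort_coe, hrel H hH, ← hcdef]
  have hcardU : (Set.toFinset (Set.univ \ (Z : Set G))).card = p ^ k * c - c := by
    rw [← Set.ncard_eq_toFinset_card', Set.ncard_diff (Set.subset_univ _), Set.ncard_univ,
      ← Nat.card_coe_set_eq, SetLike.coe_sort_coe, ← Z.index_mul_card, hk, ← hcdef]
  have hsum : ∑ H ∈ T, (Subgroup.relIndex Z H * c - c) = p ^ k * c - c := by
    rw [← hcardU, ← hcover, Finset.card_biUnion hdisj]
    exact Finset.sum_congr rfl fun H hH => (hcardD H hH).symm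
  -- cancel c
  have hsum2 : ∑ H ∈ T, (Subgroup.relIndex Z H - 1) = p ^ k - 1 := by
    have h1 : ∀ H ∈ T, Subgroup.relIndex Z H * c - c = (Subgroup.relIndex Z H - 1) * c := by
      intro H hH
      rw [Nat.sub_mul, one_mul]
    rw [Finset.sum_congr rfl h1, ← Finset.sum_mul] at hsum
    have h2 : p ^ k * c - c = (p ^ k - 1) * c := by rw [Nat.sub_mul, one_mul]
    rw [h2] at hsum
    exact Nat.eq_of_mul_eq_mul_right hc0 hsum
  -- count T
  have hTcard : T.card = (p ^ k - 1) / (p - 1) := by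
    set S : Set (Subgroup G) := (fun a : G => Subgroup.centralizer {a}) '' {a : G | a ∉ Z}
      with hSdef
    set Φ : Subgroup G → Subgroup G :=
      fun H => H ⊓ Subgroup.centralizer (H : Set G) with hΦ
    have h1 : 𝒮 = Φ '' S := by
      rw [h𝒮, hSdef, Set.image_image]
      rfl
    have hinj : Set.InjOn Φ S := by
      rintro H₁ ⟨a, ha, rfl⟩ H₂ ⟨b, hb, rfl⟩ heq
      have heq' : centerCentralizer a = centerCentralizer b := heq
      have hab : a ∈ centerCentralizer b := heq' ▸ mem_centerCentralizer_self a
      exact (centralizer_eq_of_mem hF hb ha hab).symm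
    have h2 : 𝒮.ncard = S.ncard := by rw [h1, Set.ncard_image_of_injOn hinj]
    have h3 : cent G = insert ⊤ S := by
      ext H
      constructor
      · rintro ⟨a, rfl⟩
        by_cases ha : a ∈ Z
        · left
          exact Subgroup.centralizer_eq_top_iff_subset.2 (Set.singleton_subset_iff.2 ha)
        · right
          exact ⟨a, ha, rfl⟩
      · rintro (rfl | ⟨a, _, rfl⟩)
        · exact ⟨1, Subgroup.centralizer_eq_top_iff_subset.2
            (Set.singleton_subset_iff.2 (Subgroup.one_mem Z))⟩
        · exact ⟨a, rfl⟩
    have h4 : (⊤ : Subgroup G) ∉ S := by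
      rintro ⟨a, ha, hCa⟩
      exact ha (Set.singleton_subset_iff.1 (Subgroup.centralizer_eq_top_iff_subset.1 hCa))
    have h5 : numCent G = S.ncard + 1 := by
      rw [numCent, h3, Set.ncard_insert_of_notMem h4]
    have h6 : T.card = 𝒮.ncard := (Set.ncard_eq_toFinset_card 𝒮 h𝒮fin).symm
    rw [h6, h2]
    omega
  -- geometric identity
  have hgeom : ((p ^ k - 1) / (p - 1)) * (p - 1) = p ^ k - 1 := by
    refine Nat.div_mul_cancel ?_
    simpa using Nat.sub_dvd_pow_sub_pow p 1 k
  -- finishing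
  have hxT : centerCentralizer x ∈ T := (hmemT _).2 ⟨x, hx, rfl⟩
  by_contra hne
  have hgt : p - 1 < Subgroup.relIndex Z (centerCentralizer x) - 1 := by
    have := hple _ hxT
    omega
  have hlt : ∑ H ∈ T, (p - 1) < ∑ H ∈ T, (Subgroup.relIndex Z H - 1) :=
    Finset.sum_lt_sum (fun H hH => by have := hple H hH; omega) ⟨_, hxT, hgt⟩
  rw [Finset.sum_const, smul_eq_mul, hTcard, hgeom, hsum2] at hlt
  exact lt_irrefl _ hlt
end

section
/- Let G be an extraspecial p-group of order p^{2a+1}. Then the number of distinct element centralizers of G equals (p^{2a} − 1)/(p − 1) + 1, and this equals the number of z-classes of G. -/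
open scoped commutatorElement

section Aux
variable {G : Type*} [Group G]

lemma comm_mul_left (hc : ∀ g h : G, ⁅g, h⁆ ∈ Subgroup.center G) (g h x : G) :
    ⁅g * h, x⁆ = ⁅g, x⁆ * ⁅h, x⁆ := by
  have h1 : ⁅g * h, x⁆ = g * ⁅h, x⁆ * g⁻¹ * ⁅g, x⁆ := by group
  have h2 : g * ⁅h, x⁆ = ⁅h, x⁆ * g := Subgroup.mem_center_iff.mp (hc h x) g
  rw [h1, h2]
  have h3 : ⁅h, x⁆ * g * g⁻¹ * ⁅g, x⁆ = ⁅h, x⁆ * ⁅g, x⁆ := by group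
  rw [h3, (Subgroup.mem_center_iff.mp (hc g x) ⁅h, x⁆)]

lemma comm_mul_right (hc : ∀ g h : G, ⁅g, h⁆ ∈ Subgroup.center G) (g x y : G) :
    ⁅g, x * y⁆ = ⁅g, x⁆ * ⁅g, y⁆ := by
  have h1 : ⁅g, x * y⁆ = ⁅g, x⁆ * (x * ⁅g, y⁆ * x⁻¹) := by group
  rw [h1, (Subgroup.mem_center_iff.mp (hc g y) x)]
  group

/-- left commutator map as a hom -/
def commHomL (hc : ∀ g h : G, ⁅g, h⁆ ∈ Subgroup.center G) (x : G) : G →* G :=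
  MonoidHom.mk' (fun g => ⁅g, x⁆) (fun a b => comm_mul_left hc a b x)

/-- right commutator map as a hom -/
def commHomR (hc : ∀ g h : G, ⁅g, h⁆ ∈ Subgroup.center G) (g : G) : G →* G :=
  MonoidHom.mk' (fun x => ⁅g, x⁆) (comm_mul_right hc g)

lemma comm_pow_right (hc : ∀ g h : G, ⁅g, h⁆ ∈ Subgroup.center G) (g x : G) (n : ℕ) :
    ⁅g, x ^ n⁆ = ⁅g, x⁆ ^ n := map_pow (commHomR hc g) x n

lemma comm_inv_right (hc : ∀ g h : G, ⁅g, h⁆ ∈ Subgroup.center G) (g x : G) :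
    ⁅g, x⁻¹⁆ = ⁅g, x⁆⁻¹ := map_inv (commHomR hc g) x

lemma comm_zpow_left (hc : ∀ g h : G, ⁅g, h⁆ ∈ Subgroup.center G) (g x : G) (m : ℤ) :
    ⁅g ^ m, x⁆ = ⁅g, x⁆ ^ m := map_zpow (commHomL hc x) g m

lemma comm_eq_one_iff_mem {g x : G} : ⁅g, x⁆ = 1 ↔ g ∈ Subgroup.centralizer {x} := by
  rw [Subgroup.mem_centralizer_singleton_iff, commutatorElement_def]
  constructor
  · intro h
    have : g * x * g⁻¹ * x⁻¹ * (x * g) = 1 * (x * g) := by rw [h]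
    simpa [mul_assoc] using this
  · intro h
    have h2 : g * x = x * g := h
    rw [show g * x * g⁻¹ * x⁻¹ = (g * x) * (x * g)⁻¹ by group, h2]
    group

lemma not_central_iff {x : G} : x ∉ Subgroup.center G ↔ ∃ g : G, ⁅g, x⁆ ≠ 1 := by
  constructor
  · intro hx
    by_contra h
    push_neg at h
    exact hx (Subgroup.mem_center_iff.mpr fun g =>
      Subgroup.mem_centralizer_singleton_iff.mp (comm_eq_one_iff_mem.mp (h g)))
  · rintro ⟨g, hg⟩ hx
    exact hg (comm_eq_one_iff_mem.mpr
      (Subgroup.mem_centralizer_singleton_iff.mpr (Subgroup.mem_center_iff.mp hx g)))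

variable {p : ℕ}

lemma central_orderOf (hp : p.Prime) (hZcard : Nat.card (Subgroup.center G) = p)
    {c : G} (hmem : c ∈ Subgroup.center G) (hc : c ≠ 1) : orderOf c = p := by
  have h1 : c ^ p = 1 := by
    have h := pow_card_eq_one' (x := (⟨c, hmem⟩ : Subgroup.center G))
    rw [hZcard] at h
    have := congrArg Subtype.val h
    simpa using this
  rcases (Nat.dvd_prime hp).mp (orderOf_dvd_of_pow_eq_one h1) with h | h
  · exact absurd (orderOf_eq_one_iff.mp h) hc
  · exact h

lemma pow_not_central (hc : ∀ g h : G, ⁅g, h⁆ ∈ Subgroup.center G) (hp : p.Prime)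
    (hZcard : Nat.card (Subgroup.center G) = p) {x : G} (hx : x ∉ Subgroup.center G)
    {m : ℕ} (h0 : 0 < m) (hm : m < p) : x ^ m ∉ Subgroup.center G := by
  obtain ⟨g, hg⟩ := not_central_iff.mp hx
  intro hmem
  have hcomm : ⁅g, x ^ m⁆ = 1 := comm_eq_one_iff_mem.mpr
    (Subgroup.mem_centralizer_singleton_iff.mpr (Subgroup.mem_center_iff.mp hmem g))
  rw [comm_pow_right hc] at hcomm
  have hord := central_orderOf hp hZcard (hc g x) hg
  have hdvd := orderOf_dvd_of_pow_eq_one hcomm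
  rw [hord] at hdvd
  exact absurd (Nat.le_of_dvd h0 hdvd) (not_le.mpr hm)

lemma centralizer_pow_mul (hc : ∀ g h : G, ⁅g, h⁆ ∈ Subgroup.center G) (hp : p.Prime)
    (hZcard : Nat.card (Subgroup.center G) = p) {x z : G} (hz : z ∈ Subgroup.center G)
    {k : ℕ} (h0 : 0 < k) (hk : k < p) :
    Subgroup.centralizer {x ^ k * z} = Subgroup.centralizer {x} := by
  ext g
  rw [← comm_eq_one_iff_mem, ← comm_eq_one_iff_mem, comm_mul_right hc, comm_pow_right hc]
  have hz1 : ⁅g, z⁆ = 1 := comm_eq_one_iff_mem.mpr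
    (Subgroup.mem_centralizer_singleton_iff.mpr (Subgroup.mem_center_iff.mp hz g))
  rw [hz1, mul_one]
  constructor
  · intro h
    by_contra hne
    have hord := central_orderOf hp hZcard (hc g x) hne
    have hdvd := orderOf_dvd_of_pow_eq_one h
    rw [hord] at hdvd
    exact absurd (Nat.le_of_dvd h0 hdvd) (not_le.mpr hk)
  · intro h; rw [h, one_pow]

lemma centralizer_eq_top_iff {x : G} :
    Subgroup.centralizer ({x} : Set G) = ⊤ ↔ x ∈ Subgroup.center G := by
  rw [Subgroup.centralizer_eq_top_iff_subset, Set.singleton_subset_iff]; rfl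

lemma index_centralizer (hc : ∀ g h : G, ⁅g, h⁆ ∈ Subgroup.center G) (hp : p.Prime)
    (hZcard : Nat.card (Subgroup.center G) = p) {x : G} (hx : x ∉ Subgroup.center G) :
    (Subgroup.centralizer ({x} : Set G)).index = p := by
  have hker : (commHomL hc x).ker = Subgroup.centralizer {x} := by
    ext g
    rw [MonoidHom.mem_ker, ← comm_eq_one_iff_mem]
    rfl
  have hle : (commHomL hc x).range ≤ Subgroup.center G := by
    rintro _ ⟨g, rfl⟩
    exact hc g x
  have hdvd : Nat.card (commHomL hc x).range ∣ p := hZcard ▸ Subgroup.card_dvd_of_le hle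
  have hne : Nat.card (commHomL hc x).range ≠ 1 := by
    intro h
    obtain ⟨g, hg⟩ := not_central_iff.mp hx
    have : (commHomL hc x).range = ⊥ := Subgroup.eq_bot_of_card_eq _ h
    exact hg (Subgroup.mem_bot.mp (this ▸ MonoidHom.mem_range.mpr ⟨g, rfl⟩))
  have hcard : Nat.card (commHomL hc x).range = p :=
    ((Nat.dvd_prime hp).mp hdvd).resolve_left hne
  rw [← hker, Subgroup.index_ker, hcard]

lemma key_lemma [Finite G] (hc : ∀ g h : G, ⁅g, h⁆ ∈ Subgroup.center G) (hp : p.Prime)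
    (hZcard : Nat.card (Subgroup.center G) = p) {x y : G} (hx : x ∉ Subgroup.center G)
    (hxy : Subgroup.centralizer ({x} : Set G) = Subgroup.centralizer {y}) :
    ∃ k : ℕ, ∃ z : G, z ∈ Subgroup.center G ∧ 0 < k ∧ k < p ∧ y = x ^ k * z := by
  haveI : Fact p.Prime := ⟨hp⟩
  obtain ⟨g0, hg0⟩ := not_central_iff.mp hx
  have hg0x : g0 ∉ Subgroup.centralizer ({x} : Set G) := fun h => hg0 (comm_eq_one_iff_mem.mpr h)
  have hg0y' : g0 ∉ Subgroup.centralizer ({y} : Set G) := hxy ▸ hg0x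
  have hg0y : ⁅g0, y⁆ ≠ 1 := fun h => hg0y' (comm_eq_one_iff_mem.mp h)
  set c : G := ⁅g0, x⁆ with hc_def
  have hordc : orderOf c = p := central_orderOf hp hZcard (hc g0 x) hg0
  have hc'ne : (⟨c, hc g0 x⟩ : Subgroup.center G) ≠ 1 := fun h => hg0 (congrArg Subtype.val h)
  obtain ⟨m, hm⟩ := Subgroup.mem_zpowers_iff.mp
    (mem_zpowers_of_prime_card hZcard hc'ne (g' := (⟨⁅g0, y⁆, hc g0 y⟩ : Subgroup.center G)))
  have hdc : c ^ m = ⁅g0, y⁆ := congrArg Subtype.val hm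
  set k : ℕ := (m % (p : ℤ)).toNat with hk_def
  have hppos : (0:ℤ) < (p:ℤ) := by exact_mod_cast hp.pos
  have hmod_lt : m % (p:ℤ) < p := Int.emod_lt_of_pos m hppos
  have hmod_nonneg : 0 ≤ m % (p:ℤ) := Int.emod_nonneg m (by exact_mod_cast hp.ne_zero)
  have hkm : c ^ (k : ℤ) = c ^ m := by
    rw [hk_def, Int.toNat_of_nonneg hmod_nonneg, ← hordc]
    exact_mod_cast zpow_mod_orderOf c m
  have hck : c ^ k = ⁅g0, y⁆ := by rw [← zpow_natCast, hkm, hdc]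
  have hk_lt : k < p := by omega
  have hk_pos : 0 < k := by
    rcases Nat.eq_zero_or_pos k with h | h
    · exfalso; apply hg0y; rw [← hck, h, pow_zero]
    · exact h
  refine ⟨k, (x ^ k)⁻¹ * y, ?_, hk_pos, hk_lt, by group⟩
  rw [Subgroup.mem_center_iff]
  intro g
  have hcomm : ⁅g, (x ^ k)⁻¹ * y⁆ = 1 := by
    rw [comm_mul_right hc, comm_inv_right hc, comm_pow_right hc]
    suffices hsuff : ⁅g, y⁆ = ⁅g, x⁆ ^ k by rw [hsuff]; group
    have hidx : (Subgroup.centralizer ({x} : Set G)).index = p := index_centralizer hc hp hZcard hx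
    haveI hnormal : (Subgroup.centralizer ({x} : Set G)).Normal := by
      constructor
      intro n hn g'
      have h1 : g' * n * g'⁻¹ = ⁅g', n⁆ * n := by group
      rw [h1]
      exact Subgroup.mul_mem _ (Subgroup.center_le_centralizer {x} (hc g' n)) hn
    have hcardQ : Nat.card (G ⧸ Subgroup.centralizer ({x} : Set G)) = p := by
      rw [← Subgroup.index_eq_card, hidx]
    have hne1 : ((g0 : G) : G ⧸ Subgroup.centralizer ({x} : Set G)) ≠ 1 := by
      rw [Ne, QuotientGroup.eq_one_iff]; exact hg0x
    obtain ⟨n, hn⟩ := Subgroup.mem_zpowers_iff.mp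
      (mem_zpowers_of_prime_card hcardQ hne1
        (g' := ((g : G) : G ⧸ Subgroup.centralizer ({x} : Set G))))
    have hmem : (g0 ^ n)⁻¹ * g ∈ Subgroup.centralizer ({x} : Set G) := by
      rw [← QuotientGroup.eq, QuotientGroup.mk_zpow, hn]
    have hmemy : (g0 ^ n)⁻¹ * g ∈ Subgroup.centralizer ({y} : Set G) := hxy ▸ hmem
    have hg_eq : g = g0 ^ n * ((g0 ^ n)⁻¹ * g) := by group
    have e1 : ⁅g, y⁆ = ⁅g0, y⁆ ^ n := by
      conv_lhs => rw [hg_eq]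
      rw [comm_mul_left hc, comm_zpow_left hc,
        comm_eq_one_iff_mem.mpr hmemy, mul_one]
    have e2 : ⁅g, x⁆ = c ^ n := by
      conv_lhs => rw [hg_eq]
      rw [comm_mul_left hc, comm_zpow_left hc,
        comm_eq_one_iff_mem.mpr hmem, mul_one]
    rw [e1, e2, ← hck, ← zpow_natCast c k, ← zpow_mul, ← zpow_natCast (c ^ n) k, ← zpow_mul,
      mul_comm]
  exact Subgroup.mem_centralizer_singleton_iff.mp (comm_eq_one_iff_mem.mp hcomm)

lemma pow_mul_central_inj (hc : ∀ g h : G, ⁅g, h⁆ ∈ Subgroup.center G) (hp : p.Prime)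
    (hZcard : Nat.card (Subgroup.center G) = p) {x : G} (hx : x ∉ Subgroup.center G)
    {k1 k2 : ℕ} {z1 z2 : G} (hz1 : z1 ∈ Subgroup.center G) (hz2 : z2 ∈ Subgroup.center G)
    (hlt : k1 < k2) (hk2 : k2 < p) (heq : x ^ k1 * z1 = x ^ k2 * z2) : False := by
  have hsplit : x ^ k2 = x ^ k1 * x ^ (k2 - k1) := by
    rw [← pow_add]; congr 1; omega
  rw [hsplit, mul_assoc] at heq
  have h1 : z1 = x ^ (k2 - k1) * z2 := mul_left_cancel heq
  have h2 : x ^ (k2 - k1) = z1 * z2⁻¹ := by rw [h1]; group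
  have hmem : x ^ (k2 - k1) ∈ Subgroup.center G := by
    rw [h2]; exact Subgroup.mul_mem _ hz1 (Subgroup.inv_mem _ hz2)
  exact pow_not_central hc hp hZcard hx (by omega) (by omega) hmem

end Aux
theorem stmt10 (G : Type*) [Group G] [Finite G] (p a : ℕ) (hp : p.Prime)
    (hcard : Nat.card G = p ^ (2 * a + 1))
    (hZ : Subgroup.center G = commutator G)
    (hPhi : frattini G = commutator G)
    (hZcard : Nat.card (Subgroup.center G) = p) :
    numCent G = (p ^ (2 * a) - 1) / (p - 1) + 1 ∧
      numZClasses G = (p ^ (2 * a) - 1) / (p - 1) + 1 := by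
  classical
  haveI := Fintype.ofFinite G
  have hc : ∀ g h : G, ⁅g, h⁆ ∈ Subgroup.center G := by
    intro g h
    rw [hZ, commutator_def]
    exact Subgroup.commutator_mem_commutator (Subgroup.mem_top g) (Subgroup.mem_top h)
  set f : G → Subgroup G := fun x => Subgroup.centralizer {x} with hf
  set S : Finset G := Finset.univ.filter (fun x => x ∉ Subgroup.center G) with hS
  have hZfin : (Finset.univ.filter (fun x : G => x ∈ Subgroup.center G)).card = p := by
    rw [← hZcard, Nat.card_eq_fintype_card, Fintype.card_subtype]
  have hple : p ≤ p ^ (2 * a + 1) := Nat.le_self_pow (by omega) p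
  have hScard : S.card = p ^ (2 * a + 1) - p := by
    rw [hS, Finset.filter_not, Finset.card_sdiff_of_subset (Finset.filter_subset _ _), hZfin,
      Finset.card_univ, ← Nat.card_eq_fintype_card, hcard]
  -- fiber cardinality
  have hfiber : ∀ x ∈ S, (S.filter (fun y => f y = f x)).card = (p - 1) * p := by
    intro x hxS
    have hx : x ∉ Subgroup.center G := (Finset.mem_filter.mp hxS).2
    have hset : S.filter (fun y => f y = f x)
        = ((Finset.Ico 1 p) ×ˢ (Finset.univ.filter (fun z : G => z ∈ Subgroup.center G))).image
            (fun kz : ℕ × G => x ^ kz.1 * kz.2) := by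
      ext y
      simp only [Finset.mem_filter, Finset.mem_image, Finset.mem_product, Finset.mem_Ico,
        Finset.mem_univ, true_and, hS, hf]
      constructor
      · rintro ⟨hyS, hfy⟩
        obtain ⟨k, z, hz, hk0, hkp, hyz⟩ := key_lemma hc hp hZcard hx hfy.symm
        exact ⟨(k, z), ⟨⟨hk0, hkp⟩, hz⟩, hyz.symm⟩
      · rintro ⟨⟨k, z⟩, ⟨⟨hk0, hkp⟩, hz⟩, rfl⟩
        have hcent := centralizer_pow_mul (x := x) hc hp hZcard hz hk0 hkp
        refine ⟨?_, hcent⟩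
        intro hmem
        exact hx (centralizer_eq_top_iff.mp (by rw [← hcent, centralizer_eq_top_iff.mpr hmem]))
    have hinj : Set.InjOn (fun kz : ℕ × G => x ^ kz.1 * kz.2)
        ↑((Finset.Ico 1 p) ×ˢ (Finset.univ.filter (fun z : G => z ∈ Subgroup.center G))) := by
      rintro ⟨k1, z1⟩ h1 ⟨k2, z2⟩ h2 heq
      simp only [Finset.coe_product, Set.mem_prod, Finset.mem_coe, Finset.mem_Ico,
        Finset.mem_filter, Finset.mem_univ, true_and] at h1 h2
      obtain ⟨⟨hk10, hk1p⟩, hz1⟩ := h1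
      obtain ⟨⟨hk20, hk2p⟩, hz2⟩ := h2
      simp only at heq
      have hkk : k1 = k2 := by
        by_contra hne
        rcases Nat.lt_or_ge k1 k2 with hlt | hge
        · exact pow_mul_central_inj hc hp hZcard hx hz1 hz2 hlt hk2p heq
        · exact pow_mul_central_inj hc hp hZcard hx hz2 hz1
            (lt_of_le_of_ne hge (Ne.symm hne)) hk1p heq.symm
      subst hkk
      have : z1 = z2 := mul_left_cancel heq
      rw [this]
    rw [hset, Finset.card_image_of_injOn hinj, Finset.card_product, Nat.card_Ico, hZfin]
  -- total count
  have hcount : S.card = (S.image f).card * ((p - 1) * p) := by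
    have h1 : S.card = ∑ b ∈ S.image f, (S.filter (fun y => f y = b)).card :=
      Finset.card_eq_sum_card_fiberwise (fun x hx => Finset.mem_image_of_mem f hx)
    have h2 : ∀ b ∈ S.image f, (S.filter (fun y => f y = b)).card = (p - 1) * p := by
      intro b hb
      obtain ⟨x, hxS, rfl⟩ := Finset.mem_image.mp hb
      exact hfiber x hxS
    rw [h1, Finset.sum_congr rfl h2, Finset.sum_const, smul_eq_mul]
  have hNcard : (S.image f).card = (p ^ (2 * a) - 1) / (p - 1) := by
    have hp1 : 1 < p := hp.one_lt
    have hmul : (S.image f).card * ((p - 1) * p) = p ^ (2 * a + 1) - p := by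
      rw [← hcount, hScard]
    have hrw : p ^ (2 * a + 1) - p = (p ^ (2 * a) - 1) * p := by
      rw [Nat.sub_mul, one_mul, ← pow_succ]
    have h2 : (S.image f).card * (p - 1) * p = (p ^ (2 * a) - 1) * p := by
      rw [mul_assoc, hmul, hrw]
    have h3 : (S.image f).card * (p - 1) = p ^ (2 * a) - 1 :=
      Nat.eq_of_mul_eq_mul_right hp.pos h2
    rw [← h3, Nat.mul_div_cancel _ (by omega : 0 < p - 1)]
  -- description of cent G
  have hrange : cent G = insert ⊤ (↑(S.image f) : Set (Subgroup G)) := by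
    ext H
    simp only [cent, Set.mem_range, Set.mem_insert_iff, Finset.coe_image, Set.mem_image,
      Finset.mem_coe]
    constructor
    · rintro ⟨x, rfl⟩
      by_cases hx : x ∈ Subgroup.center G
      · left; exact centralizer_eq_top_iff.mpr hx
      · right; exact ⟨x, Finset.mem_filter.mpr ⟨Finset.mem_univ x, hx⟩, rfl⟩
    · rintro (rfl | ⟨x, hxS, rfl⟩)
      · exact ⟨1, centralizer_eq_top_iff.mpr (Subgroup.one_mem _)⟩
      · exact ⟨x, rfl⟩
  have htopnot : (⊤ : Subgroup G) ∉ (↑(S.image f) : Set (Subgroup G)) := by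
    rw [Finset.mem_coe]
    intro h
    obtain ⟨x, hxS, hfx⟩ := Finset.mem_image.mp h
    exact (Finset.mem_filter.mp hxS).2 (centralizer_eq_top_iff.mp hfx)
  have hnum : numCent G = (p ^ (2 * a) - 1) / (p - 1) + 1 := by
    rw [numCent, hrange, Set.ncard_insert_of_notMem htopnot (Finset.finite_toSet _),
      Set.ncard_coe_finset, hNcard]
  refine ⟨hnum, ?_⟩
  -- z-classes
  have hZnormal : ∀ x : G, (Subgroup.centralizer ({x} : Set G)).Normal := by
    intro x
    constructor
    intro n hn g
    have h1 : g * n * g⁻¹ = ⁅g, n⁆ * n := by group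
    rw [h1]
    exact Subgroup.mul_mem _ (Subgroup.center_le_centralizer {x} (hc g n)) hn
  have hconj : ∀ x : G, conjugates (Subgroup.centralizer ({x} : Set G))
      = {Subgroup.centralizer ({x} : Set G)} := by
    intro x
    ext K
    simp only [conjugates, Set.mem_setOf_eq, Set.mem_singleton_iff]
    constructor
    · rintro ⟨g, rfl⟩
      ext k
      simp only [Subgroup.mem_map, MulEquiv.coe_toMonoidHom, MulAut.conj_apply]
      constructor
      · rintro ⟨h, hh, rfl⟩
        exact (hZnormal x).conj_mem h hh g
      · intro hk
        refine ⟨g⁻¹ * k * g, ?_, by group⟩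
        have := (hZnormal x).conj_mem k hk g⁻¹
        simpa using this
    · rintro rfl
      refine ⟨1, ?_⟩
      ext k
      simp [Subgroup.mem_map]
  have hfe : (fun x : G => conjugates (Subgroup.centralizer {x}))
      = (fun H : Subgroup G => ({H} : Set (Subgroup G))) ∘ f := funext fun x => hconj x
  rw [numZClasses, hfe, Set.range_comp,
    Set.ncard_image_of_injective _ (fun A B h => Set.singleton_eq_singleton_iff.mp h)]
  exact hnum
end
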